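/- Let Ĝ be a finite simple graph on nonempty vertex set V̂ with vertex weights w : V̂ → ℕ⁺ and guard-band size GB ∈ ℕ. Then the optimal MUFI satisfies |opt(Ĝ)| ≤ (χ(Ĝ) − 1)·GB + Σ_{i=1}^{χ(Ĝ)} ŵ_{I(i)}, where χ(Ĝ) is the chromatic number of Ĝ and ŵ_{I(1)} ≥ ŵ_{I(2)} ≥ … are the vertex weights listed in nonincreasing order (so the sum is over the χ(Ĝ) largest vertex weights). -/

import Mathlib

/-- A proper spectrum assignment: each vertex `v` receives the interval of `w v`
consecutive positive integers starting at `b v`, and for every edge the two intervals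
are at distance at least `GB`. -/
def IsProperAssign {V : Type*} (G : SimpleGraph V) (w : V → ℕ) (GB : ℕ) (b : V → ℕ) : Prop :=
  (∀ v, 1 ≤ b v) ∧
  ∀ u v : V, G.Adj u v →
    ∀ s ∈ Finset.Icc (b u) (b u + w u - 1), ∀ t ∈ Finset.Icc (b v) (b v + w v - 1),
      (GB : ℤ) ≤ |(s : ℤ) - (t : ℤ)| - 1

/-- The maximum used frequency-slot index of an assignment. -/
def MUFI {V : Type*} [Fintype V] (w b : V → ℕ) : ℕ :=
  Finset.univ.sup fun v => b v + w v - 1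

/-- The optimal MUFI: the minimum MUFI over all proper spectrum assignments. -/
noncomputable def optMUFI {V : Type*} [Fintype V] (G : SimpleGraph V) (w : V → ℕ)
    (GB : ℕ) : ℕ :=
  sInf {m : ℕ | ∃ b : V → ℕ, IsProperAssign G w GB b ∧ MUFI w b = m}

private lemma take_one_sum_le_aux {l : List ℕ} {a : ℕ} (ha : ∀ x ∈ l, x ≤ a) (j : ℕ) :
    ((l.drop j).take 1).sum ≤ a := by
  have h1 : ∀ x ∈ (l.drop j).take 1, x ≤ a := fun x hx =>
    ha x (List.mem_of_mem_drop (List.mem_of_mem_take hx))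
  calc ((l.drop j).take 1).sum ≤ ((l.drop j).take 1).length • a :=
        List.sum_le_card_nsmul _ a h1
    _ ≤ 1 * a := by
        have := List.length_take_le 1 (l.drop j)
        simpa [smul_eq_mul] using Nat.mul_le_mul_right a this
    _ = a := one_mul a

private lemma take_sum_tail_le_aux {l : List ℕ} {a : ℕ} (ha : ∀ x ∈ l, x ≤ a) (m : ℕ) :
    (l.take (m + 1)).sum ≤ a + (l.take m).sum := by
  rw [List.take_add, List.sum_append]
  have := take_one_sum_le_aux ha m
  omega

/-- Any submultiset of `s` with at most `k` elements has sum at most the sum of the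
`k` largest elements of `s`. -/
private lemma sum_le_sum_take_aux (s : Multiset ℕ) :
    ∀ (k : ℕ) (t : Multiset ℕ), t ≤ s → t.card ≤ k →
    t.sum ≤ ((Multiset.sort s (· ≥ ·)).take k).sum := by
  induction s using Multiset.strongInductionOn with
  | ih s IH =>
  intro k t hts hcard
  rcases eq_or_ne t 0 with rfl | ht0
  · simp
  have hs0 : s ≠ 0 := fun h => ht0 (le_antisymm (h ▸ hts) (Multiset.zero_le t))
  have hsortne : Multiset.sort s (· ≥ ·) ≠ [] := by
    intro h
    apply hs0
    have := Multiset.sort_eq s (· ≥ ·)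
    rw [h] at this
    simpa using this.symm
  obtain ⟨a, l', hl⟩ := List.exists_cons_of_ne_nil hsortne
  have hseq : s = a ::ₘ (↑l' : Multiset ℕ) := by
    have := Multiset.sort_eq s (· ≥ ·)
    rw [hl] at this
    rw [← this]; rfl
  have hsorted : List.Pairwise (· ≥ ·) (a :: l') := by
    have := Multiset.pairwise_sort s (· ≥ ·)
    rwa [hl] at this
  have hha : ∀ x ∈ l', x ≤ a := fun x hx => (List.pairwise_cons.mp hsorted).1 x hx
  have hsortl' : Multiset.sort (↑l' : Multiset ℕ) (· ≥ ·) = l' := by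
    apply List.Perm.eq_of_pairwise' (Multiset.pairwise_sort _ _) (List.pairwise_cons.mp hsorted).2
      (Multiset.coe_eq_coe.mp (Multiset.sort_eq _ _))
  have hlt : (↑l' : Multiset ℕ) < s := hseq ▸ Multiset.lt_cons_self _ a
  have hk : 1 ≤ k := le_trans (Multiset.card_pos.mpr ht0) hcard
  obtain ⟨m, rfl⟩ : ∃ m, k = m + 1 := ⟨k - 1, by omega⟩
  rw [hl]
  by_cases hat : a ∈ t
  · have ht' : t.erase a ≤ (↑l' : Multiset ℕ) := by
      have := Multiset.erase_le_erase a hts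
      rwa [hseq, Multiset.erase_cons_head] at this
    have hc' : (t.erase a).card ≤ m := by
      rw [Multiset.card_erase_of_mem hat, Nat.pred_eq_sub_one]
      omega
    have := IH _ hlt m (t.erase a) ht' hc'
    rw [hsortl'] at this
    have htsum : t.sum = a + (t.erase a).sum := by
      conv_lhs => rw [← Multiset.cons_erase hat]
      rw [Multiset.sum_cons]
    rw [htsum, List.take_succ_cons, List.sum_cons]
    omega
  · have ht' : t ≤ (↑l' : Multiset ℕ) := by
      rw [hseq] at hts
      rw [Multiset.le_iff_count]
      intro x
      have := Multiset.le_iff_count.mp hts x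
      rcases eq_or_ne x a with rfl | hxa
      · have : x ∉ t := hat
        simp [Multiset.count_eq_zero_of_notMem this]
      · rwa [Multiset.count_cons_of_ne hxa] at this
    have := IH _ hlt (m + 1) t ht' hcard
    rw [hsortl'] at this
    rw [List.take_succ_cons, List.sum_cons]
    have h2 := take_sum_tail_le_aux hha m
    omega

/-- The optimal MUFI is at most `(χ(Ĝ) - 1)·GB` plus the sum of the `χ(Ĝ)` largest
vertex weights. -/
theorem optMUFI_le_chromatic_upper {V : Type*} [Fintype V] [Nonempty V]
    (G : SimpleGraph V) (w : V → ℕ) (hw : ∀ v, 1 ≤ w v) (GB : ℕ)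
    (χ : ℕ) (hχ : G.chromaticNumber = (χ : ℕ∞)) :
    optMUFI G w GB ≤ (χ - 1) * GB +
      ((Multiset.sort (Finset.univ.val.map w) (· ≥ ·)).take χ).sum := by
  classical
  have hcol : G.Colorable χ := by
    rw [← SimpleGraph.chromaticNumber_le_iff_colorable, hχ]
  have hχ1 : 1 ≤ χ := by
    have h := SimpleGraph.chromaticNumber_pos hcol
    rw [hχ] at h
    exact_mod_cast h
  obtain ⟨C⟩ := hcol
  set M : ℕ → ℕ := fun j => (Finset.univ.filter fun v => (C v : ℕ) = j).sup w with hM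
  set b : V → ℕ := fun v => 1 + ∑ j ∈ Finset.range (C v), (M j + GB) with hb
  have hwM : ∀ v : V, w v ≤ M (C v) := fun v => Finset.le_sup (by simp)
  have hb1 : ∀ v, 1 ≤ b v := fun v => by simp [hb]
  have hbv : ∀ u v : V, (C u : ℕ) < (C v : ℕ) → b u + w u + GB ≤ b v := by
    intro u v huv
    have h1 : ∑ j ∈ Finset.range ((C u : ℕ) + 1), (M j + GB) ≤
        ∑ j ∈ Finset.range (C v : ℕ), (M j + GB) :=
      Finset.sum_le_sum_of_subset (Finset.range_subset_range.mpr huv)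
    rw [Finset.sum_range_succ] at h1
    have := hwM u
    simp only [hb]
    omega
  -- the key separation fact, for `C u < C v`
  have key : ∀ u v : V, (C u : ℕ) < (C v : ℕ) →
      ∀ s ∈ Finset.Icc (b u) (b u + w u - 1), ∀ t ∈ Finset.Icc (b v) (b v + w v - 1),
      (GB : ℤ) ≤ |(s : ℤ) - (t : ℤ)| - 1 := by
    intro u v huv s hs t ht
    rw [Finset.mem_Icc] at hs ht
    have h1 := hbv u v huv
    have h2 := hb1 u
    have h3 := hw u
    have hst : s + GB + 1 ≤ t := by omega
    have habs : |(s : ℤ) - (t : ℤ)| = (t : ℤ) - s := by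
      rw [abs_sub_comm]
      exact abs_of_nonneg (sub_nonneg.mpr (by exact_mod_cast (show s ≤ t by omega)))
    rw [habs]
    omega
  have hproper : IsProperAssign G w GB b := by
    refine ⟨hb1, fun u v huv s hs t ht => ?_⟩
    have hne : C u ≠ C v := C.valid huv
    rcases lt_trichotomy ((C u : ℕ)) ((C v : ℕ)) with h | h | h
    · exact key u v h s hs t ht
    · exact absurd (Fin.ext h) hne
    · have := key v u h t ht s hs
      rwa [abs_sub_comm] at this
  -- bound on the MUFI of this assignment
  have hmufi : MUFI w b ≤ (χ - 1) * GB + ∑ j ∈ Finset.range χ, M j := by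
    apply Finset.sup_le
    intro v _
    have hcv : (C v : ℕ) < χ := (C v).isLt
    have h1 : ∑ j ∈ Finset.range (C v), (M j + GB) =
        (∑ j ∈ Finset.range (C v), M j) + (C v : ℕ) * GB := by
      rw [Finset.sum_add_distrib, Finset.sum_const, Finset.card_range, smul_eq_mul]
    have h2 : (∑ j ∈ Finset.range (C v), M j) + M (C v) ≤ ∑ j ∈ Finset.range χ, M j := by
      rw [← Finset.sum_range_succ]
      exact Finset.sum_le_sum_of_subset (Finset.range_subset_range.mpr (by omega))
    have h3 := hwM v
    have h4 : (C v : ℕ) * GB ≤ (χ - 1) * GB := Nat.mul_le_mul_right GB (by omega)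
    simp only [hb]
    omega
  -- the sum of the class maxima is at most the sum of the χ largest weights
  have hsum : ∑ j ∈ Finset.range χ, M j ≤
      ((Multiset.sort (Finset.univ.val.map w) (· ≥ ·)).take χ).sum := by
    set filt : Finset ℕ := (Finset.range χ).filter
      (fun j => ((Finset.univ : Finset V).filter fun v => (C v : ℕ) = j).Nonempty) with hfilt
    have hzero : ∀ j ∈ Finset.range χ, j ∉ filt → M j = 0 := by
      intro j hjr hj
      have hne : ¬ ((Finset.univ : Finset V).filter fun v => (C v : ℕ) = j).Nonempty :=
        fun h => hj (Finset.mem_filter.mpr ⟨hjr, h⟩)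
      rw [Finset.not_nonempty_iff_eq_empty] at hne
      simp [hM, hne]
    have hrestrict : ∑ j ∈ Finset.range χ, M j = ∑ j ∈ filt, M j :=
      (Finset.sum_subset (Finset.filter_subset _ _) hzero).symm
    have hrep : ∀ j : ℕ, ∃ v : V, j ∈ filt → ((C v : ℕ) = j ∧ M j = w v) := by
      intro j
      by_cases hj : j ∈ filt
      · have hne : ((Finset.univ : Finset V).filter fun v => (C v : ℕ) = j).Nonempty := by
          simp only [hfilt, Finset.mem_filter] at hj
          exact hj.2
        obtain ⟨v, hv, hveq⟩ := Finset.exists_mem_eq_sup _ hne w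
        exact ⟨v, fun _ => ⟨(Finset.mem_filter.mp hv).2, hveq⟩⟩
      · exact ⟨Classical.arbitrary V, fun h => absurd h hj⟩
    choose g hg using hrep
    have hinj : Set.InjOn g filt := by
      intro j hj j' hj' hgg
      have h1 := (hg j hj).1
      have h2 := (hg j' hj').1
      rw [← h1, ← h2, hgg]
    have hsum2 : ∑ j ∈ filt, M j = ∑ v ∈ filt.image g, w v := by
      rw [Finset.sum_image (fun j hj j' hj' => hinj hj hj')]
      exact Finset.sum_congr rfl fun j hj => (hg j hj).2
    set t : Multiset ℕ := (filt.image g).val.map w with htdef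
    have hts : t ≤ Finset.univ.val.map w :=
      Multiset.map_le_map (Finset.val_le_iff.mpr (Finset.subset_univ _))
    have htc : t.card ≤ χ := by
      rw [htdef, Multiset.card_map]
      calc (filt.image g).val.card = (filt.image g).card := rfl
        _ ≤ filt.card := Finset.card_image_le
        _ ≤ (Finset.range χ).card := Finset.card_le_card (Finset.filter_subset _ _)
        _ = χ := Finset.card_range χ
    have := sum_le_sum_take_aux (Finset.univ.val.map w) χ t hts htc
    rw [hrestrict, hsum2]
    have htsum : (∑ v ∈ filt.image g, w v) = t.sum := rfl
    rw [htsum]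
    exact this
  calc optMUFI G w GB ≤ MUFI w b := Nat.sInf_le ⟨b, hproper, rfl⟩
    _ ≤ (χ - 1) * GB + ∑ j ∈ Finset.range χ, M j := hmufi
    _ ≤ _ := by omega
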